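/- Let (X,T) be a topological dynamical system, μ ∈ M(X,T), f ∈ L²(μ). If there exists a strictly increasing sequence A = {a_i} ⊆ ℕ such that f is μ-A-equicontinuous, then f is rigid: there exists a strictly increasing sequence (n_k) with f∘T^{n_k} → f in L²(μ). -/

import Mathlib

set_option linter.unusedSectionVars false
open MeasureTheory Filter Topology Set
open scoped ENNReal NNReal
set_option maxHeartbeats 1000000

section
variable {X : Type*} [MetricSpace X] [MeasurableSpace X] [BorelSpace X]
  {μ : Measure X} {T : X ≃ₜ X} {f : X → ℝ}

lemma aux_symm (hT : MeasurePreserving T μ μ) : MeasurePreserving (⇑T.symm) μ μ := by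
  refine ⟨T.symm.continuous.measurable, ?_⟩
  conv_lhs => rw [← hT.map_eq]
  rw [Measure.map_map T.symm.continuous.measurable T.continuous.measurable]
  simp [Function.comp_def]

lemma aux_leftinv (T : X ≃ₜ X) (m : ℕ) (x : X) : (⇑T.symm)^[m] ((⇑T)^[m] x) = x :=
  Function.LeftInverse.iterate T.symm_apply_apply m x

lemma aux_indicator_comp (T : X ≃ₜ X) (f : X → ℝ) (m : ℕ) (S : Set X) :
    S.indicator (fun x => f ((⇑T)^[m] x)) =
      fun x => (((⇑T.symm)^[m] ⁻¹' S).indicator f) ((⇑T)^[m] x) := by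
  funext x
  by_cases hx : x ∈ S
  · rw [indicator_of_mem hx, indicator_of_mem]
    simpa [aux_leftinv T m x] using hx
  · rw [indicator_of_notMem hx, indicator_of_notMem]
    simpa [aux_leftinv T m x] using hx

lemma aux_eLpNorm_indicator (hT : MeasurePreserving T μ μ)
    (hf : AEStronglyMeasurable f μ) (m : ℕ) {S : Set X} (hS : MeasurableSet S) :
    eLpNorm (S.indicator (fun x => f ((⇑T)^[m] x))) 2 μ =
      eLpNorm ((((⇑T.symm)^[m]) ⁻¹' S).indicator f) 2 μ := by
  rw [aux_indicator_comp T f m S]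
  have h := eLpNorm_comp_measurePreserving (p := 2)
    (hf.indicator (hS.preimage ((aux_symm hT).iterate m).measurable)) (hT.iterate m)
  simpa [Function.comp_def] using h

lemma aux_measure_preimage (hT : MeasurePreserving T μ μ) (m : ℕ) {S : Set X}
    (hS : MeasurableSet S) : μ (((⇑T.symm)^[m]) ⁻¹' S) = μ S :=
  ((aux_symm hT).iterate m).measure_preimage hS.nullMeasurableSet

lemma aux_memLp (hT : MeasurePreserving T μ μ) (hf : MemLp f 2 μ) (m : ℕ) :
    MemLp (fun x => f ((⇑T)^[m] x)) 2 μ := by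
  have h : MemLp f 2 (Measure.map ((⇑T)^[m]) μ) := by rw [(hT.iterate m).map_eq]; exact hf
  exact h.comp_of_map (hT.iterate m).measurable.aemeasurable

lemma aux_eLpNorm_eq (hT : MeasurePreserving T μ μ) (hf : AEStronglyMeasurable f μ) (m : ℕ) :
    eLpNorm (fun x => f ((⇑T)^[m] x)) 2 μ = eLpNorm f 2 μ :=
  eLpNorm_comp_measurePreserving hf (hT.iterate m)

lemma aux_partition {K : Set X} (hK : IsCompact K) {δ : ℝ} (hδ : 0 < δ) :
    ∃ (m : ℕ) (q : Fin m → X) (E : Fin m → Set X),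
      (∀ i, q i ∈ K) ∧ (∀ i, MeasurableSet (E i)) ∧
      (∀ i, E i ⊆ K ∩ Metric.ball (q i) δ) ∧ (K ⊆ ⋃ i, E i) ∧
      (∀ i j x, x ∈ E i → x ∈ E j → i = j) := by
  classical
  have hcover : K ⊆ ⋃ x ∈ K, Metric.ball x δ := fun x hx =>
    mem_biUnion hx (Metric.mem_ball_self hδ)
  obtain ⟨t, hts, htf, htK⟩ := hK.elim_finite_subcover_image
    (fun x _ => Metric.isOpen_ball) hcover
  set m := htf.toFinset.card with hm
  set q : Fin m → X := fun i => (htf.toFinset.equivFin.symm i : X) with hq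
  set E : Fin m → Set X :=
    fun i => (K ∩ Metric.ball (q i) δ) \ ⋃ (j : Fin m) (_ : j < i), Metric.ball (q j) δ
    with hE
  have hqK : ∀ i, q i ∈ K := fun i =>
    hts (htf.mem_toFinset.1 (htf.toFinset.equivFin.symm i).2)
  have hEball : ∀ i, E i ⊆ K ∩ Metric.ball (q i) δ := fun i => diff_subset
  have hmeas : ∀ i, MeasurableSet (E i) := by
    intro i
    refine ((hK.isClosed.measurableSet.inter Metric.isOpen_ball.measurableSet).diff ?_)
    exact MeasurableSet.iUnion fun j => MeasurableSet.iUnion fun _ =>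
      Metric.isOpen_ball.measurableSet
  have hball : ∀ x ∈ K, ∃ i, x ∈ Metric.ball (q i) δ := by
    intro x hx
    obtain ⟨y, hyt, hy⟩ := mem_iUnion₂.1 (htK hx)
    exact ⟨htf.toFinset.equivFin ⟨y, htf.mem_toFinset.2 hyt⟩, by
      simpa [hq] using hy⟩
  have hcov : K ⊆ ⋃ i, E i := by
    intro x hx
    have hne : (Finset.univ.filter fun i => x ∈ Metric.ball (q i) δ).Nonempty := by
      obtain ⟨i, hi⟩ := hball x hx
      exact ⟨i, Finset.mem_filter.2 ⟨Finset.mem_univ _, hi⟩⟩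
    set i0 := (Finset.univ.filter fun i => x ∈ Metric.ball (q i) δ).min' hne with hi0
    refine mem_iUnion.2 ⟨i0, ⟨⟨hx, ?_⟩, ?_⟩⟩
    · exact (Finset.mem_filter.1 ((Finset.univ.filter _).min'_mem hne)).2
    · intro hmem
      obtain ⟨j, hj⟩ := mem_iUnion.1 hmem
      obtain ⟨hjlt, hjball⟩ : j < i0 ∧ x ∈ Metric.ball (q j) δ := by
        obtain ⟨h1, h2⟩ := mem_iUnion.1 hj
        exact ⟨h1, h2⟩
      have : i0 ≤ j := Finset.min'_le (Finset.univ.filter fun i => x ∈ Metric.ball (q i) δ) j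
        (Finset.mem_filter.2 ⟨Finset.mem_univ _, hjball⟩)
      exact absurd this (not_le.2 hjlt)
  have hdisj : ∀ i j x, x ∈ E i → x ∈ E j → i = j := by
    intro i j x hxi hxj
    by_contra hne
    rcases lt_or_gt_of_ne hne with h | h
    · exact hxj.2 (mem_iUnion.2 ⟨i, mem_iUnion.2 ⟨h, (hEball i hxi).2⟩⟩)
    · exact hxi.2 (mem_iUnion.2 ⟨j, mem_iUnion.2 ⟨h, (hEball j hxj).2⟩⟩)
  exact ⟨m, q, E, hqK, hmeas, hEball, hcov, hdisj⟩

lemma aux_net [CompactSpace X] [IsProbabilityMeasure μ]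
    (hT : MeasurePreserving T μ μ) (hf : MemLp f 2 μ) (a : ℕ → ℕ)
    (heq : ∀ τ > (0 : ℝ), ∃ K : Set X, IsCompact K ∧
      μ K > ENNReal.ofReal (1 - τ) ∧ ∀ ε > (0 : ℝ), ∃ δ > (0 : ℝ),
      ∀ x ∈ K, ∀ y ∈ K, dist x y < δ →
        ∀ n : ℕ, |f ((⇑T)^[a n] x) - f ((⇑T)^[a n] y)| < ε)
    {ε : ℝ} (hε : 0 < ε) :
    ∃ F : Set (X → ℝ), F.Finite ∧ (∀ h ∈ F, MemLp h 2 μ) ∧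
      ∀ n : ℕ, ∃ h ∈ F,
        eLpNorm (fun x => f ((⇑T)^[a n] x) - h x) 2 μ ≤ ENNReal.ofReal (3 * ε) := by
  classical
  set g : ℕ → X → ℝ := fun n x => f ((⇑T)^[a n] x) with hg
  have hgmem : ∀ n, MemLp (g n) 2 μ := fun n => aux_memLp hT hf (a n)
  have hgaesm : ∀ n, AEStronglyMeasurable (g n) μ := fun n => (hgmem n).1
  -- uniform integrability
  obtain ⟨η, hη, hUI⟩ := hf.eLpNorm_indicator_le one_le_two (by norm_num) hε
  have hUIg : ∀ n (S : Set X), MeasurableSet S → μ S ≤ ENNReal.ofReal η →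
      eLpNorm (S.indicator (g n)) 2 μ ≤ ENNReal.ofReal ε := by
    intro n S hS hμS
    rw [show S.indicator (g n) = S.indicator (fun x => f ((⇑T)^[a n] x)) from rfl,
      aux_eLpNorm_indicator hT hf.1 (a n) hS]
    exact hUI _ (hS.preimage ((aux_symm hT).iterate (a n)).measurable)
      (by rw [aux_measure_preimage hT (a n) hS]; exact hμS)
  -- compact set K
  set τ := min (η / 2) (1 / 2) with hτdef
  have hτ : 0 < τ := lt_min (half_pos hη) one_half_pos
  obtain ⟨K, hKc, hKμ, hKeq⟩ := heq τ hτ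
  have hKm : MeasurableSet K := hKc.isClosed.measurableSet
  have hKcμ : μ Kᶜ ≤ ENNReal.ofReal (η / 2) := by
    have h1 : μ Kᶜ = 1 - μ K := by
      rw [measure_compl hKm (measure_ne_top μ K), measure_univ]
    rw [h1]
    calc (1 : ℝ≥0∞) - μ K ≤ 1 - ENNReal.ofReal (1 - τ) := tsub_le_tsub_left hKμ.le 1
      _ = ENNReal.ofReal 1 - ENNReal.ofReal (1 - τ) := by rw [ENNReal.ofReal_one]
      _ = ENNReal.ofReal (1 - (1 - τ)) := by
          rw [ENNReal.ofReal_sub _ (by linarith [min_le_right (η/2) (1/2 : ℝ)] : (0:ℝ) ≤ 1 - τ)]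
      _ = ENNReal.ofReal τ := by ring_nf
      _ ≤ ENNReal.ofReal (η / 2) := ENNReal.ofReal_le_ofReal (min_le_left _ _)
  -- equicontinuity scale and partition
  obtain ⟨δ, hδ, hP⟩ := hKeq ε hε
  obtain ⟨m, q, E, hqK, hEm, hEb, hcov, hdisj⟩ := aux_partition hKc hδ
  -- threshold
  set C := eLpNorm f 2 μ with hC
  have hCt : C ≠ ⊤ := hf.2.ne
  set x0 : ℝ≥0∞ := ENNReal.ofReal (η / 2) / (m + 1) with hx0
  have hx00 : x0 ≠ 0 := by
    simp only [hx0, ne_eq, ENNReal.div_eq_zero_iff]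
    push_neg
    constructor
    · simp [ENNReal.ofReal_eq_zero]; linarith
    · exact ENNReal.add_ne_top.2 ⟨ENNReal.natCast_ne_top m, ENNReal.one_ne_top⟩
  have hx0t : x0 ≠ ⊤ := by
    simp only [hx0]
    exact (ENNReal.div_lt_top ENNReal.ofReal_ne_top
      ((lt_of_lt_of_le zero_lt_one le_add_self).ne' : ((m:ℝ≥0∞)+1) ≠ 0)).ne
  set D2 : ℝ≥0∞ := C ^ (2:ℝ) / x0 with hD2
  have hD2t : D2 ≠ ⊤ := by
    simp only [hD2]
    exact (ENNReal.div_lt_top (by simp [ENNReal.rpow_lt_top_of_nonneg, hCt]) hx00).ne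
  set R : ℝ := D2.toReal + 1 with hR
  have hR1 : (1:ℝ) ≤ R := by
    simp only [hR]; have := ENNReal.toReal_nonneg (a := D2); linarith
  have hR0 : 0 < R := by linarith
  have hRD : D2 ≤ ENNReal.ofReal R := by
    calc D2 = ENNReal.ofReal D2.toReal := (ENNReal.ofReal_toReal hD2t).symm
      _ ≤ ENNReal.ofReal R := ENNReal.ofReal_le_ofReal (by simp [hR])
  have hRbig : C ^ (2:ℝ) / (ENNReal.ofReal R) ^ (2:ℝ) ≤ x0 := by
    have hR2 : (ENNReal.ofReal R) ^ (2:ℝ) ≠ 0 := by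
      simp [ENNReal.rpow_eq_zero_iff, ENNReal.ofReal_eq_zero, not_le, hR0]
    have hR2t : (ENNReal.ofReal R) ^ (2:ℝ) ≠ ⊤ := by
      simp [ENNReal.rpow_eq_top_iff, ENNReal.ofReal_eq_zero, not_le, hR0]
    rw [ENNReal.div_le_iff hR2 hR2t]
    have h1 : ENNReal.ofReal R ≤ (ENNReal.ofReal R) ^ (2:ℝ) := by
      nth_rewrite 1 [← ENNReal.rpow_one (ENNReal.ofReal R)]
      exact ENNReal.rpow_le_rpow_of_exponent_le (by simpa using hR1) (by norm_num)
    calc C ^ (2:ℝ) = x0 * D2 := by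
          rw [hD2, ENNReal.mul_div_cancel hx00 hx0t]
      _ ≤ x0 * ENNReal.ofReal R := mul_le_mul_right hRD _
      _ ≤ x0 * (ENNReal.ofReal R) ^ (2:ℝ) := mul_le_mul_right h1 _
  set M : ℝ := ε + R with hM
  -- bad sets are small
  have hbad : ∀ n i, M < |g n (q i)| → μ (E i) ≤ x0 := by
    intro n i hMi
    have hlow : ∀ x ∈ E i, R ≤ |g n x| := by
      intro x hx
      have hxK : x ∈ K := (hEb i hx).1
      have hxd : dist (q i) x < δ := by
        have := (hEb i hx).2
        rw [Metric.mem_ball] at this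
        rw [dist_comm]; exact this
      have hlt : |g n (q i) - g n x| < ε := hP (q i) (hqK i) x hxK hxd n
      have : |g n (q i)| - |g n x| < ε := lt_of_le_of_lt (abs_sub_abs_le_abs_sub _ _) hlt
      simp only [hM] at hMi
      linarith
    have hmono : eLpNorm ((E i).indicator (fun _ => R)) 2 μ ≤ eLpNorm (g n) 2 μ := by
      refine le_trans (eLpNorm_mono (g := (E i).indicator (g n)) ?_) (eLpNorm_indicator_le _)
      intro x
      by_cases hx : x ∈ E i
      · rw [indicator_of_mem hx, indicator_of_mem hx]
        rw [Real.norm_eq_abs, Real.norm_eq_abs, abs_of_pos hR0]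
        exact hlow x hx
      · rw [indicator_of_notMem hx, indicator_of_notMem hx]
    rw [eLpNorm_indicator_const (hEm i) (by norm_num) (by norm_num),
      aux_eLpNorm_eq hT hf.1 (a n)] at hmono
    -- hmono : ‖R‖₊ * μ (E i) ^ (1 / (2:ℝ≥0∞).toReal) ≤ C
    have hnR : (‖R‖ₑ : ℝ≥0∞) = ENNReal.ofReal R := by
      rw [Real.enorm_eq_ofReal hR0.le]
    rw [hnR] at hmono
    have h2 : μ (E i) ^ ((1:ℝ)/2) ≤ C / ENNReal.ofReal R := by
      rw [ENNReal.le_div_iff_mul_le (Or.inl (by simp [ENNReal.ofReal_eq_zero, not_le, hR0]))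
        (Or.inl ENNReal.ofReal_ne_top), mul_comm]
      convert hmono using 2
      norm_num
    calc μ (E i) = (μ (E i) ^ ((1:ℝ)/2)) ^ (2:ℝ) := by
          rw [← ENNReal.rpow_mul]; norm_num
      _ ≤ (C / ENNReal.ofReal R) ^ (2:ℝ) := ENNReal.rpow_le_rpow h2 (by norm_num)
      _ = C ^ (2:ℝ) / (ENNReal.ofReal R) ^ (2:ℝ) := by
          rw [ENNReal.div_rpow_of_nonneg _ _ (by norm_num)]
      _ ≤ x0 := hRbig
  -- bad index sets
  set bad : ℕ → Finset (Fin m) := fun n => Finset.univ.filter (fun i => M < |g n (q i)|)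
    with hbaddef
  set B : ℕ → Set X := fun n => Kᶜ ∪ ⋃ (i : Fin m) (_ : i ∈ bad n), E i with hBdef
  have hBmeas : ∀ n, MeasurableSet (B n) := fun n =>
    hKm.compl.union (MeasurableSet.iUnion fun i => MeasurableSet.iUnion fun _ => hEm i)
  have hBμ : ∀ n, μ (B n) ≤ ENNReal.ofReal η := by
    intro n
    calc μ (B n) ≤ μ Kᶜ + μ (⋃ (i : Fin m) (_ : i ∈ bad n), E i) := measure_union_le _ _
      _ ≤ ENNReal.ofReal (η/2) + ∑ i ∈ bad n, μ (E i) :=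
          add_le_add hKcμ (measure_biUnion_finset_le _ _)
      _ ≤ ENNReal.ofReal (η/2) + ∑ _i ∈ bad n, x0 := by
          gcongr with i hi
          exact hbad n i (Finset.mem_filter.1 hi).2
      _ ≤ ENNReal.ofReal (η/2) + (m + 1) * x0 := by
          rw [Finset.sum_const, nsmul_eq_mul]
          gcongr
          have : (bad n).card ≤ m := (Finset.card_filter_le _ _).trans_eq (by simp)
          calc ((bad n).card : ℝ≥0∞) ≤ (m : ℝ≥0∞) := by exact_mod_cast this
            _ ≤ (m : ℝ≥0∞) + 1 := le_self_add
      _ = ENNReal.ofReal (η/2) + ENNReal.ofReal (η/2) := by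
          rw [hx0, ENNReal.mul_div_cancel
            ((lt_of_lt_of_le zero_lt_one le_add_self).ne' : ((m:ℝ≥0∞)+1) ≠ 0)
            (ENNReal.add_ne_top.2 ⟨ENNReal.natCast_ne_top m, ENNReal.one_ne_top⟩)]
      _ = ENNReal.ofReal η := by rw [← ENNReal.ofReal_add (by positivity) (by positivity)]; ring_nf
  -- coefficients and simple functions
  set c : ℕ → Fin m → ℝ := fun n i => if M < |g n (q i)| then 0 else g n (q i) with hcdef
  have hcM : ∀ n i, |c n i| ≤ M := by
    intro n i
    simp only [hcdef]
    split
    · simp; linarith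
    · next h => exact le_of_not_gt h
  set sf : (Fin m → ℝ) → X → ℝ := fun w x => ∑ i, (E i).indicator (fun _ => w i) x with hsfdef
  have hsfmeas : ∀ w, Measurable (sf w) := by
    intro w
    exact Finset.measurable_sum _ fun i _ => measurable_const.indicator (hEm i)
  have hsfmem : ∀ w, MemLp (sf w) 2 μ := by
    intro w
    have h := memLp_finset_sum' (μ := μ) (p := 2) Finset.univ
      (fun i _ => memLp_indicator_const 2 (hEm i) (w i) (Or.inr (measure_ne_top μ _)))
    have heqf : (∑ i ∈ Finset.univ, (E i).indicator fun _ => w i) = sf w := by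
      funext x; simp [hsfdef, Finset.sum_apply]
    rwa [heqf] at h
  have hsfval : ∀ (w : Fin m → ℝ) x (i : Fin m), x ∈ E i → sf w x = w i := by
    intro w x i hx
    simp only [hsfdef]
    rw [Finset.sum_eq_single i]
    · exact indicator_of_mem hx _
    · intro j _ hj
      exact indicator_of_notMem (fun hxj => hj (hdisj j i x hxj hx)) _
    · intro h; exact absurd (Finset.mem_univ i) h
  have hsfval0 : ∀ (w : Fin m → ℝ) x, x ∉ K → sf w x = 0 := by
    intro w x hx
    simp only [hsfdef]
    refine Finset.sum_eq_zero fun i _ => indicator_of_notMem (fun hxi => hx (hEb i hxi).1) _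
  -- decomposition of g n - sf (c n)
  have hdec : ∀ n, (fun x => g n x - sf (c n) x) =
      fun x => (B n)ᶜ.indicator (fun x => g n x - sf (c n) x) x + (B n).indicator (g n) x := by
    intro n
    funext x
    by_cases hx : x ∈ B n
    · rw [indicator_of_notMem (by simpa using hx), indicator_of_mem hx]
      have hzero : sf (c n) x = 0 := by
        rcases hx with hx | hx
        · exact hsfval0 _ x hx
        · obtain ⟨i, hi⟩ := mem_iUnion.1 hx
          obtain ⟨hibad, hxi⟩ : i ∈ bad n ∧ x ∈ E i := by
            obtain ⟨h1, h2⟩ := mem_iUnion.1 hi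
            exact ⟨h1, h2⟩
          rw [hsfval _ x i hxi]
          simp only [hcdef]
          rw [if_pos (Finset.mem_filter.1 hibad).2]
      rw [hzero]; ring
    · rw [indicator_of_mem (by simpa using hx), indicator_of_notMem hx]
      ring
  have hgoodbd : ∀ n x, |(B n)ᶜ.indicator (fun x => g n x - sf (c n) x) x| ≤ ε := by
    intro n x
    by_cases hx : x ∈ B n
    · rw [indicator_of_notMem (by simpa using hx)]
      simp [hε.le]
    · rw [indicator_of_mem (by simpa using hx)]
      have hxK : x ∈ K := by
        by_contra hxK
        exact hx (Or.inl hxK)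
      obtain ⟨i, hxi⟩ := mem_iUnion.1 (hcov hxK)
      have hnotbad : i ∉ bad n := by
        intro hibad
        exact hx (Or.inr (mem_iUnion.2 ⟨i, mem_iUnion.2 ⟨hibad, hxi⟩⟩))
      have hci : c n i = g n (q i) := by
        simp only [hcdef]
        rw [if_neg]
        intro hlt
        exact hnotbad (Finset.mem_filter.2 ⟨Finset.mem_univ _, hlt⟩)
      rw [hsfval _ x i hxi, hci]
      have hxd : dist x (q i) < δ := by
        have := (hEb i hxi).2
        rwa [Metric.mem_ball] at this
      exact (hP x hxK (q i) (hqK i) hxd n).le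
  -- eLpNorm bound for g n - sf (c n)
  have hmain : ∀ n, eLpNorm (fun x => g n x - sf (c n) x) 2 μ ≤
      ENNReal.ofReal ε + ENNReal.ofReal ε := by
    intro n
    rw [hdec n]
    have haesm1 : AEStronglyMeasurable ((B n)ᶜ.indicator (fun x => g n x - sf (c n) x)) μ :=
      (((hgaesm n).sub (hsfmeas (c n)).aestronglyMeasurable)).indicator (hBmeas n).compl
    have haesm2 : AEStronglyMeasurable ((B n).indicator (g n)) μ :=
      (hgaesm n).indicator (hBmeas n)
    refine le_trans (eLpNorm_add_le haesm1 haesm2 one_le_two) ?_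
    gcongr
    · refine le_trans (eLpNorm_le_of_ae_bound (C := ε)
        (Eventually.of_forall fun x => by simpa [Real.norm_eq_abs] using hgoodbd n x)) ?_
      simp [measure_univ]
    · exact hUIg n (B n) (hBmeas n) (hBμ n)
  -- finite net on the cube
  have hcube : IsCompact (Set.pi univ (fun _ : Fin m => Icc (-M) M)) :=
    isCompact_univ_pi fun _ => isCompact_Icc
  obtain ⟨V, hVfin, hVcov⟩ := (Metric.totallyBounded_iff.1 hcube.totallyBounded) ε hε
  refine ⟨(fun v => sf v) '' V, hVfin.image _, ?_, ?_⟩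
  · rintro h ⟨v, _, rfl⟩
    exact hsfmem v
  · intro n
    have hcmem : c n ∈ Set.pi univ (fun _ : Fin m => Icc (-M) M) := by
      intro i _
      exact abs_le.1 (hcM n i)
    obtain ⟨v, hvV, hvb⟩ := mem_iUnion₂.1 (hVcov hcmem)
    refine ⟨sf v, mem_image_of_mem _ hvV, ?_⟩
    have hdistv : ∀ i, |c n i - v i| < ε := by
      intro i
      rcases Nat.eq_zero_or_pos m with hm0 | hm0
      · exact absurd (i.2.trans_eq hm0) (Nat.not_lt_zero _)
      · have := (dist_pi_lt_iff hε).1 (by rwa [Metric.mem_ball] at hvb) i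
        rwa [Real.dist_eq] at this
    have hsfbd : ∀ x, |sf (c n) x - sf v x| ≤ ε := by
      intro x
      by_cases hx : ∃ i, x ∈ E i
      · obtain ⟨i, hxi⟩ := hx
        rw [hsfval _ x i hxi, hsfval _ x i hxi]
        exact (hdistv i).le
      · push_neg at hx
        have h1 : sf (c n) x = 0 := Finset.sum_eq_zero fun i _ =>
          indicator_of_notMem (hx i) _
        have h2 : sf v x = 0 := Finset.sum_eq_zero fun i _ =>
          indicator_of_notMem (hx i) _
        rw [h1, h2]; simp [hε.le]
    have hsplit : (fun x => g n x - sf v x) =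
        fun x => (g n x - sf (c n) x) + (sf (c n) x - sf v x) := by
      funext x; ring
    calc eLpNorm (fun x => g n x - sf v x) 2 μ
        ≤ eLpNorm (fun x => g n x - sf (c n) x) 2 μ +
          eLpNorm (fun x => sf (c n) x - sf v x) 2 μ := by
          rw [hsplit]
          exact eLpNorm_add_le ((hgaesm n).sub (hsfmeas (c n)).aestronglyMeasurable)
            ((hsfmeas (c n)).aestronglyMeasurable.sub (hsfmeas v).aestronglyMeasurable)
            one_le_two
      _ ≤ (ENNReal.ofReal ε + ENNReal.ofReal ε) + ENNReal.ofReal ε := by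
          gcongr
          · exact hmain n
          · refine le_trans (eLpNorm_le_of_ae_bound (C := ε)
              (Eventually.of_forall fun x => by simpa [Real.norm_eq_abs] using hsfbd x)) ?_
            simp [measure_univ]
      _ = ENNReal.ofReal (3 * ε) := by
          rw [← ENNReal.ofReal_add hε.le hε.le, ← ENNReal.ofReal_add (by linarith) hε.le]
          ring_nf


set_option synthInstance.maxHeartbeats 400000

lemma aux_subseq [CompactSpace X] [IsProbabilityMeasure μ]
    (hT : MeasurePreserving T μ μ) (hf : MemLp f 2 μ) (a : ℕ → ℕ)
    (heq : ∀ τ > (0 : ℝ), ∃ K : Set X, IsCompact K ∧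
      μ K > ENNReal.ofReal (1 - τ) ∧ ∀ ε > (0 : ℝ), ∃ δ > (0 : ℝ),
      ∀ x ∈ K, ∀ y ∈ K, dist x y < δ →
        ∀ n : ℕ, |f ((⇑T)^[a n] x) - f ((⇑T)^[a n] y)| < ε) :
    ∃ φ : ℕ → ℕ, StrictMono φ ∧
      ∀ ε > (0:ℝ), ∃ N : ℕ, ∀ k ≥ N, ∀ l ≥ N,
        eLpNorm (fun x => f ((⇑T)^[a (φ k)] x) - f ((⇑T)^[a (φ l)] x)) 2 μ
          < ENNReal.ofReal ε := by
  classical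
  haveI : Fact ((1:ℝ≥0∞) ≤ 2) := ⟨one_le_two⟩
  set g : ℕ → X → ℝ := fun n x => f ((⇑T)^[a n] x) with hg
  have hgmem : ∀ n, MemLp (g n) 2 μ := fun n => aux_memLp hT hf (a n)
  set F : ℕ → Lp ℝ 2 μ := fun n => (hgmem n).toLp (g n) with hF
  set toL : (X → ℝ) → Lp ℝ 2 μ :=
    fun h => if hh : MemLp h 2 μ then hh.toLp h else 0 with htoL
  have htb : TotallyBounded (Set.range F) := by
    rw [EMetric.totallyBounded_iff]
    intro ε hε
    obtain ⟨r, hr, hrε⟩ : ∃ r : ℝ, 0 < r ∧ ENNReal.ofReal (3 * r) < ε := by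
      rcases eq_or_ne ε ⊤ with rfl | hεt
      · exact ⟨1, one_pos, by simp [lt_top_iff_ne_top]⟩
      · refine ⟨ε.toReal / 4, div_pos (ENNReal.toReal_pos hε.ne' hεt) (by norm_num), ?_⟩
        have h4 : 3 * (ε.toReal / 4) < ε.toReal := by
          have := ENNReal.toReal_pos hε.ne' hεt
          linarith
        calc ENNReal.ofReal (3 * (ε.toReal / 4)) < ENNReal.ofReal ε.toReal :=
              (ENNReal.ofReal_lt_ofReal_iff (ENNReal.toReal_pos hε.ne' hεt)).2 h4
          _ = ε := ENNReal.ofReal_toReal hεt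
    obtain ⟨Fs, hFsfin, hFsmem, hFsnet⟩ := aux_net hT hf a heq hr
    refine ⟨toL '' Fs, hFsfin.image _, ?_⟩
    rintro y ⟨n, rfl⟩
    obtain ⟨h, hhFs, hhnet⟩ := hFsnet n
    refine mem_iUnion₂.2 ⟨toL h, mem_image_of_mem _ hhFs, ?_⟩
    have hhmem : MemLp h 2 μ := hFsmem h hhFs
    have hedist : edist (F n) (toL h) = eLpNorm (fun x => g n x - h x) 2 μ := by
      simp only [htoL, dif_pos hhmem, hF]
      rw [Lp.edist_toLp_toLp]
      rfl
    rw [EMetric.mem_ball, hedist]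
    exact lt_of_le_of_lt hhnet hrε
  have hcomp : IsCompact (closure (Set.range F)) :=
    TotallyBounded.isCompact_of_isClosed htb.closure isClosed_closure
  obtain ⟨L, _, φ, hφ, hconv⟩ :=
    hcomp.tendsto_subseq (fun n => subset_closure (Set.mem_range_self n))
  refine ⟨φ, hφ, ?_⟩
  intro ε hε
  obtain ⟨N, hN⟩ := (Metric.tendsto_atTop.1 hconv) (ε / 2) (by linarith)
  refine ⟨N, fun k hk l hl => ?_⟩
  have hdist : dist (F (φ k)) (F (φ l)) < ε :=
    calc dist (F (φ k)) (F (φ l)) ≤ dist (F (φ k)) L + dist (F (φ l)) L :=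
          dist_triangle_right _ _ _
      _ < ε / 2 + ε / 2 := add_lt_add (hN k hk) (hN l hl)
      _ = ε := by ring
  have hedist : eLpNorm (fun x => g (φ k) x - g (φ l) x) 2 μ
      = edist (F (φ k)) (F (φ l)) := by
    simp only [hF]
    rw [Lp.edist_toLp_toLp]
    rfl
  rw [show (fun x => f ((⇑T)^[a (φ k)] x) - f ((⇑T)^[a (φ l)] x))
      = fun x => g (φ k) x - g (φ l) x from rfl, hedist, edist_dist]
  exact (ENNReal.ofReal_lt_ofReal_iff hε).2 hdist
end

theorem stmt8 {X : Type*} [MetricSpace X] [CompactSpace X] [MeasurableSpace X]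
    [BorelSpace X] (μ : Measure X) [IsProbabilityMeasure μ] (T : X ≃ₜ X)
    (hT : MeasurePreserving T μ μ) (f : X → ℝ) (hf : MemLp f 2 μ)
    (a : ℕ → ℕ) (ha : StrictMono a)
    (heq : ∀ τ > (0 : ℝ), ∃ K : Set X, IsCompact K ∧
      μ K > ENNReal.ofReal (1 - τ) ∧ ∀ ε > (0 : ℝ), ∃ δ > (0 : ℝ),
      ∀ x ∈ K, ∀ y ∈ K, dist x y < δ →
        ∀ n : ℕ, |f ((⇑T)^[a n] x) - f ((⇑T)^[a n] y)| < ε) :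
    ∃ t : ℕ → ℕ, StrictMono t ∧
      Tendsto (fun k => eLpNorm (fun x => f ((⇑T)^[t k] x) - f x) 2 μ)
        atTop (𝓝 0) := by
  classical
  obtain ⟨φ, hφ, hC⟩ := aux_subseq hT hf a heq
  have key : ∀ k b : ℕ, ∃ t' : ℕ, b < t' ∧
      eLpNorm (fun x => f ((⇑T)^[t'] x) - f x) 2 μ
        < ENNReal.ofReal (1 / ((k : ℝ) + 1)) := by
    intro k b
    have hεpos : (0:ℝ) < 1 / ((k : ℝ) + 1) := by positivity
    obtain ⟨N, hN⟩ := hC _ hεpos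
    set p := φ N with hp
    have haφ : StrictMono (fun l => a (φ l)) := ha.comp hφ
    set l := max N (a p + b + 1) with hl
    have hll : a p + b + 1 ≤ a (φ l) := by
      calc a p + b + 1 ≤ l := le_max_right _ _
        _ ≤ a (φ l) := haφ.le_apply
    set t' := a (φ l) - a p with ht'
    have hab : a p ≤ a (φ l) := by omega
    have hbt : b < t' := by omega
    refine ⟨t', hbt, ?_⟩
    have hcomp : ((fun x => f ((⇑T)^[t'] x) - f x) ∘ (⇑T)^[a p])
        = fun x => f ((⇑T)^[a (φ l)] x) - f ((⇑T)^[a p] x) := by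
      funext x
      simp only [Function.comp_apply]
      congr 2
      rw [← Function.iterate_add_apply]
      congr 1
      omega
    have haesm : AEStronglyMeasurable (fun x => f ((⇑T)^[t'] x) - f x) μ :=
      (aux_memLp hT hf t').1.sub hf.1
    have := eLpNorm_comp_measurePreserving (p := 2) haesm (hT.iterate (a p))
    rw [hcomp] at this
    rw [← this]
    exact hN l (le_max_left _ _) N le_rfl
  choose tf htb htε using fun k => key k
  set t : ℕ → ℕ := fun k => Nat.rec (tf 0 0) (fun k ih => tf (k+1) ih) k with htdef
  have ht0 : t 0 = tf 0 0 := rfl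
  have htsucc : ∀ k, t (k+1) = tf (k+1) (t k) := fun k => rfl
  have htmono : StrictMono t := by
    apply strictMono_nat_of_lt_succ
    intro k
    rw [htsucc k]
    exact htb (k+1) (t k)
  refine ⟨t, htmono, ?_⟩
  have hbound : ∀ k, eLpNorm (fun x => f ((⇑T)^[t k] x) - f x) 2 μ
      ≤ ENNReal.ofReal (1 / ((k : ℝ) + 1)) := by
    intro k
    cases k with
    | zero => exact (htε 0 0).le
    | succ k =>
        rw [htsucc k]
        have := (htε (k+1) (t k)).le
        simpa using this
  have hupper : Tendsto (fun k : ℕ => ENNReal.ofReal (1 / ((k : ℝ) + 1))) atTop (𝓝 0) := by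
    have h1 : Tendsto (fun k : ℕ => 1 / ((k : ℝ) + 1)) atTop (𝓝 0) :=
      tendsto_one_div_add_atTop_nhds_zero_nat
    have := ENNReal.tendsto_ofReal h1
    simpa using this
  exact tendsto_of_tendsto_of_tendsto_of_le_of_le tendsto_const_nhds hupper
    (fun k => zero_le) hbound
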